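/- arXiv:math/0405434 — 2 statements merged into one kernel-verified Lean document; each statement's English description precedes it below -/
import Mathlib

section
/- The set C of all compositions of all positive integers, equipped with the composition operation ∘, is a monoid: the operation ∘ is associative, and the composition (1) is a two-sided identity (1∘α = α∘1 = α for every composition α). -/
/-- The size `|β|` of a composition, i.e. the sum of its components. -/
def size (l : List ℕ+) : ℕ := (l.map fun x => (x : ℕ)).sum

/-- Near concatenation `α ⊙ β` of two (nonempty) compositions. -/
def odot (a b : List ℕ+) : List ℕ+ :=
  if a = [] then b
  else if b = [] then a
  else a.dropLast ++ (a.getLastI + b.headI) :: b.tail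

/-- `β^{⊙ m}`, the `m`-fold near concatenation of `β` with itself. -/
def odotPow (b : List ℕ+) : ℕ → List ℕ+
  | 0 => []
  | n + 1 => odot (odotPow b n) b

/-- The composition operation `α ∘ β = β^{⊙α₁} · β^{⊙α₂} ⋯ β^{⊙αₖ}`. -/
def compOp (a b : List ℕ+) : List ℕ+ := (a.map fun ai => odotPow b (ai : ℕ)).flatten

/-- `β₁ ∘ β₂ ∘ ⋯ ∘ βₖ` (the composition `1` is a two-sided identity for `∘`). -/
def compFold (l : List (List ℕ+)) : List ℕ+ := l.foldr compOp [1]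

/-- The list of all coarsenings of a composition. -/
def coarsenings : List ℕ+ → List (List ℕ+)
  | [] => [[]]
  | [a] => [[a]]
  | a :: b :: t => ((coarsenings (b :: t)).map (a :: ·)) ++ coarsenings ((a + b) :: t)
  termination_by l => l.length

/-- The multiset `M(β)` of partitions (as multisets of parts) of all coarsenings of `β`. -/
def Mset (b : List ℕ+) : Multiset (Multiset ℕ+) :=
  ↑((coarsenings b).map fun l => (l : Multiset ℕ+))

lemma odot_nil_left (b : List ℕ+) : odot [] b = b := by simp [odot]

lemma odot_nil_right (a : List ℕ+) : odot a [] = a := by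
  rcases eq_or_ne a [] with h | h <;> simp [odot, h]

lemma odot_ne_nil (a : List ℕ+) {b : List ℕ+} (hb : b ≠ []) : odot a b ≠ [] := by
  rcases eq_or_ne a [] with h | h <;> simp [odot, h, hb]

lemma odot_sing_cons (x h : ℕ+) (t : List ℕ+) : odot [x] (h :: t) = (x + h) :: t := by
  simp [odot, List.getLastI]

lemma odot_append_right (u : List ℕ+) {v : List ℕ+} (w : List ℕ+) (hv : v ≠ []) :
    odot u (v ++ w) = odot u v ++ w := by
  rcases eq_or_ne u [] with h | h
  · simp [h, odot_nil_left]
  · obtain ⟨hv', tv, rfl⟩ := List.exists_cons_of_ne_nil hv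
    simp [odot, h, List.append_assoc]

lemma getLastI_append {v : List ℕ+} (u : List ℕ+) (hv : v ≠ []) :
    (u ++ v).getLastI = v.getLastI := by
  rw [List.getLastI_eq_getLast?, List.getLastI_eq_getLast?, List.getLast?_append]
  have := List.getLast?_isSome.mpr hv
  obtain ⟨x, hx⟩ := Option.isSome_iff_exists.mp this
  simp [hx]

lemma odot_append_left {v : List ℕ+} (u w : List ℕ+) (hv : v ≠ []) :
    odot (u ++ v) w = u ++ odot v w := by
  rcases eq_or_ne w [] with h | h
  · simp [h, odot_nil_right]
  · have h2 : u ++ v ≠ [] := by simp [hv]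
    simp [odot, h, h2, hv, List.dropLast_append_of_ne_nil, getLastI_append u hv,
      List.append_assoc]

lemma odot_sing_assoc (x : ℕ+) (b : List ℕ+) (y : ℕ+) (hb : b ≠ []) :
    odot (odot [x] b) [y] = odot [x] (odot b [y]) := by
  obtain ⟨h, t, rfl⟩ := List.exists_cons_of_ne_nil hb
  rcases eq_or_ne t [] with rfl | ht
  · simp [odot_sing_cons, odot, List.getLastI, add_assoc]
  · have h1 : odot (h :: t) [y] = h :: odot t [y] := by
      simpa using odot_append_left [h] [y] ht
    have h2 : odot ((x+h) :: t) [y] = (x+h) :: odot t [y] := by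
      simpa using odot_append_left [x+h] [y] ht
    rw [odot_sing_cons, h2, h1]
    have h3 : odot t [y] ≠ [] := odot_ne_nil t (by simp)
    obtain ⟨h', t', he⟩ := List.exists_cons_of_ne_nil h3
    rw [he, odot_sing_cons]

lemma odot_assoc (a b c : List ℕ+) : odot (odot a b) c = odot a (odot b c) := by
  rcases eq_or_ne a [] with rfl | ha; · simp [odot_nil_left]
  rcases eq_or_ne b [] with rfl | hb; · simp [odot_nil_left, odot_nil_right]
  rcases eq_or_ne c [] with rfl | hc; · simp [odot_nil_right]
  -- peel off a's prefix
  have hax : a = a.dropLast ++ [a.getLast ha] := (List.dropLast_append_getLast ha).symm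
  set x := a.getLast ha
  rw [hax, odot_append_left _ _ (by simp), odot_append_left _ _ (odot_ne_nil _ hb),
    odot_append_left _ _ (show ([x]:List ℕ+) ≠ [] by simp)]
  congr 1
  -- peel off c's suffix
  obtain ⟨y, tc, rfl⟩ := List.exists_cons_of_ne_nil hc
  have hcy : (y :: tc : List ℕ+) = [y] ++ tc := rfl
  rw [hcy, odot_append_right _ _ (by simp), odot_append_right _ _ (by simp),
    odot_append_right _ _ (odot_ne_nil _ (by simp))]
  rw [odot_sing_assoc x b y hb]

lemma odotPow_ne_nil {b : List ℕ+} (hb : b ≠ []) {n : ℕ} (hn : n ≠ 0) :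
    odotPow b n ≠ [] := by
  cases n with
  | zero => omega
  | succ n => exact odot_ne_nil _ hb

lemma odotPow_add (b : List ℕ+) (m n : ℕ) :
    odotPow b (m + n) = odot (odotPow b m) (odotPow b n) := by
  induction n with
  | zero => simp [odotPow, odot_nil_right]
  | succ n ih => rw [← Nat.add_assoc]; simp [odotPow, ih, odot_assoc]

lemma compOp_nil_left (b : List ℕ+) : compOp [] b = [] := by simp [compOp]

lemma compOp_cons (x : ℕ+) (a b : List ℕ+) :
    compOp (x :: a) b = odotPow b (x : ℕ) ++ compOp a b := by simp [compOp]

lemma compOp_append (a a' b : List ℕ+) :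
    compOp (a ++ a') b = compOp a b ++ compOp a' b := by simp [compOp]

lemma compOp_ne_nil {a b : List ℕ+} (ha : a ≠ []) (hb : b ≠ []) : compOp a b ≠ [] := by
  obtain ⟨x, t, rfl⟩ := List.exists_cons_of_ne_nil ha
  rw [compOp_cons]
  have := odotPow_ne_nil hb (n := (x : ℕ)) (by exact_mod_cast x.ne_zero)
  simp [this]

lemma compOp_odot (a b c : List ℕ+) (hc : c ≠ []) :
    compOp (odot a b) c = odot (compOp a c) (compOp b c) := by
  rcases eq_or_ne a [] with rfl | ha
  · simp [odot_nil_left, compOp_nil_left]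
  rcases eq_or_ne b [] with rfl | hb
  · simp [odot_nil_right, compOp_nil_left]
  obtain ⟨y, tb, rfl⟩ := List.exists_cons_of_ne_nil hb
  have hax : a = a.dropLast ++ [a.getLast ha] := (List.dropLast_append_getLast ha).symm
  set x := a.getLast ha
  have hodot : odot a (y :: tb) = a.dropLast ++ (x + y) :: tb := by
    conv_lhs => rw [hax, odot_append_left _ _ (show ([x]:List ℕ+) ≠ [] by simp),
      odot_sing_cons]
  have hxne : odotPow c (x : ℕ) ≠ [] := odotPow_ne_nil hc (by exact_mod_cast x.ne_zero)
  have hyne : odotPow c (y : ℕ) ≠ [] := odotPow_ne_nil hc (by exact_mod_cast y.ne_zero)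
  rw [hodot, compOp_append, compOp_cons, compOp_cons]
  conv_rhs => rw [hax, compOp_append, compOp_cons]
  rw [compOp_nil_left, List.append_nil]
  rw [odot_append_left _ _ hxne, odot_append_right _ _ hyne, ← odotPow_add]
  push_cast
  rfl

lemma odotPow_compOp (b c : List ℕ+) (hc : c ≠ []) (n : ℕ) :
    odotPow (compOp b c) n = compOp (odotPow b n) c := by
  induction n with
  | zero => simp [odotPow, compOp_nil_left]
  | succ n ih => rw [odotPow, odotPow, ih, ← compOp_odot _ _ _ hc]

lemma compOp_assoc (a b c : List ℕ+) (hc : c ≠ []) :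
    compOp (compOp a b) c = compOp a (compOp b c) := by
  induction a with
  | nil => simp [compOp_nil_left]
  | cons x t ih =>
    rw [compOp_cons, compOp_append, ih, compOp_cons, odotPow_compOp _ _ hc]

lemma odotPow_one_succ (n : ℕ) : odotPow [1] (n + 1) = [n.succPNat] := by
  induction n with
  | zero => rfl
  | succ n ih =>
    rw [odotPow, ih, odot_sing_cons]
    congr 1

lemma odotPow_one_sing (x : ℕ+) : odotPow [1] (x : ℕ) = [x] := by
  have h : (x : ℕ) = x.natPred + 1 := (x.natPred_add_one).symm
  rw [h, odotPow_one_succ, x.succPNat_natPred]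

lemma compOp_one_left (a : List ℕ+) : compOp [1] a = a := by
  simp [compOp, odotPow, odot_nil_left]

lemma compOp_one_right (a : List ℕ+) : compOp a [1] = a := by
  induction a with
  | nil => rfl
  | cons x t ih => rw [compOp_cons, odotPow_one_sing, ih]; rfl


/-- The set of compositions of positive integers (nonempty lists of
positive integers) is a monoid under `∘`: it is closed under `∘`, `∘` is associative,
and the composition `(1)` is a two-sided identity. -/
theorem compOp_monoid :
    (∀ a b : List ℕ+, a ≠ [] → b ≠ [] → compOp a b ≠ []) ∧
    (∀ a b c : List ℕ+, a ≠ [] → b ≠ [] → c ≠ [] →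
      compOp (compOp a b) c = compOp a (compOp b c)) ∧
    (∀ a : List ℕ+, a ≠ [] → compOp [1] a = a ∧ compOp a [1] = a) := by
  refine ⟨fun a b ha hb => compOp_ne_nil ha hb,
    fun a b c _ _ hc => compOp_assoc a b c hc,
    fun a _ => ⟨compOp_one_left a, compOp_one_right a⟩⟩
end

section
/- For any compositions β and γ, reversal commutes with the composition operation: (β∘γ)* = β*∘γ*. -/
lemma odot_concat_cons (as : List ℕ+) (x y : ℕ+) (t : List ℕ+) :
    odot (as ++ [x]) (y :: t) = as ++ (x + y) :: t := by
  simp [odot, List.getLastI_eq_getLast?]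

lemma odot_reverse (a b : List ℕ+) : (odot a b).reverse = odot b.reverse a.reverse := by
  rcases List.eq_nil_or_concat a with rfl | ⟨as, x, rfl⟩
  · simp [odot_nil_left, odot_nil_right]
  rcases b with _ | ⟨y, t⟩
  · simp [odot_nil_left, odot_nil_right]
  simp only [List.concat_eq_append]
  calc (odot (as ++ [x]) (y :: t)).reverse
      = t.reverse ++ (x + y) :: as.reverse := by rw [odot_concat_cons]; simp
    _ = odot (t.reverse ++ [y]) (x :: as.reverse) := by rw [odot_concat_cons, add_comm]
    _ = odot (y :: t).reverse (as ++ [x]).reverse := by simp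

lemma odot_odotPow (b : List ℕ+) (n : ℕ) : odot b (odotPow b n) = odotPow b (n + 1) := by
  induction n with
  | zero => simp [odotPow, odot_nil_left, odot_nil_right]
  | succ n ih =>
      conv_rhs => rw [show odotPow b (n + 1 + 1) = odot (odotPow b (n + 1)) b from rfl,
        ← ih, odot_assoc]
      rfl

lemma odotPow_reverse (b : List ℕ+) (n : ℕ) :
    (odotPow b n).reverse = odotPow b.reverse n := by
  induction n with
  | zero => simp [odotPow]
  | succ n ih => rw [odotPow, odot_reverse, ih, odot_odotPow]

lemma coe_list_pnat (l : List ℕ+) :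
    (do let a ← l; pure ((a : ℕ)) : List ℕ) = l.map (fun x => (x : ℕ)) := by
  induction l with
  | nil => rfl
  | cons h t ih => simpa using ih

lemma compOp_eq (a b : List ℕ+) :
    compOp a b = (a.map fun ai => odotPow b ai.1).flatten := by
  induction a with
  | nil => rfl
  | cons h t ih =>
    unfold compOp at ih ⊢
    show (List.map _ ((pure (h : ℕ)) ++ (do let a ← t; pure ((a : ℕ))))).flatten = _
    rw [List.map_append, List.flatten_append, ih]
    simp [pure, List.pure_def, List.singleton]
    with_unfolding_all rfl

/-- Reversal commutes with the composition operation: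
`(β∘γ)* = β*∘γ*`. -/
theorem reverse_compOp (β γ : List ℕ+) (hβ : β ≠ []) (hγ : γ ≠ []) :
    (compOp β γ).reverse = compOp β.reverse γ.reverse := by
  rw [compOp_eq, compOp_eq, List.reverse_flatten, ← List.map_reverse, ← List.map_reverse, List.map_map]
  congr 1
  apply List.map_congr_left
  intro x _
  exact odotPow_reverse γ x.1
end
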